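/- Let r ≥ 2 and let a, b, p, q be positive reals with a*q ≠ b*p and N = p^r*q. Then a*q + r*b*p - (r+1)*(a*b^r*N)^(1/(r+1)) < r^(r+2) * (a*q - b*p)^2 / (a*q + r*b*p). -/

import Mathlib

lemma amgm_key (r : ℕ) (hr : 2 ≤ r) (x y : ℝ) (hx : 0 < x) (hy : 0 < y) (hne : x ≠ y) :
    x + r * y - ((r : ℝ) + 1) * (x * y ^ r) ^ ((1 : ℝ) / (r + 1))
      < (r : ℝ) ^ (r + 2) * (x - y) ^ 2 / (x + r * y) := by
  have hrr : (1:ℝ) < (r:ℝ) := by exact_mod_cast lt_of_lt_of_le one_lt_two (by exact_mod_cast hr)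
  have hr0 : (0:ℝ) < (r:ℝ) := by linarith
  have hn : (0:ℝ) < (r:ℝ) + 1 := by linarith
  have hD1 : (0:ℝ) < y + r * x := by positivity
  have hD2 : (0:ℝ) < x + r * y := by positivity
  -- AM-GM (GM ≥ HM)
  have hgm : ((r:ℝ)+1) * x * y / (y + r * x) ≤ (x * y ^ r) ^ ((1:ℝ)/(r+1)) := by
    have hw : (1:ℝ)/((r:ℝ)+1) + (r:ℝ)/((r:ℝ)+1) = 1 := by field_simp; ring
    have hamgm := Real.geom_mean_le_arith_mean2_weighted
      (by positivity : (0:ℝ) ≤ 1/((r:ℝ)+1)) (by positivity : (0:ℝ) ≤ (r:ℝ)/((r:ℝ)+1))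
      (le_of_lt (inv_pos.mpr hx)) (le_of_lt (inv_pos.mpr hy)) hw
    have hsplit : (x * y ^ r) ^ ((1:ℝ)/(r+1))
        = x ^ ((1:ℝ)/((r:ℝ)+1)) * y ^ ((r:ℝ)/((r:ℝ)+1)) := by
      rw [Real.mul_rpow hx.le (pow_nonneg hy.le r), ← Real.rpow_natCast y r,
        ← Real.rpow_mul hy.le, mul_one_div]
    rw [hsplit]
    have hinv : (x⁻¹) ^ ((1:ℝ)/((r:ℝ)+1)) * (y⁻¹) ^ ((r:ℝ)/((r:ℝ)+1))
        = (x ^ ((1:ℝ)/((r:ℝ)+1)) * y ^ ((r:ℝ)/((r:ℝ)+1)))⁻¹ := by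
      rw [Real.inv_rpow hx.le, Real.inv_rpow hy.le, mul_inv]
    rw [hinv] at hamgm
    have hG : (0:ℝ) < x ^ ((1:ℝ)/((r:ℝ)+1)) * y ^ ((r:ℝ)/((r:ℝ)+1)) := by positivity
    rw [div_le_iff₀ hD1]
    have h2 : (x ^ ((1:ℝ)/((r:ℝ)+1)) * y ^ ((r:ℝ)/((r:ℝ)+1)))
        * (1/((r:ℝ)+1) * x⁻¹ + (r:ℝ)/((r:ℝ)+1) * y⁻¹) ≥ 1 := by
      calc (x ^ ((1:ℝ)/((r:ℝ)+1)) * y ^ ((r:ℝ)/((r:ℝ)+1)))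
          * (1/((r:ℝ)+1) * x⁻¹ + (r:ℝ)/((r:ℝ)+1) * y⁻¹)
          ≥ (x ^ ((1:ℝ)/((r:ℝ)+1)) * y ^ ((r:ℝ)/((r:ℝ)+1)))
          * (x ^ ((1:ℝ)/((r:ℝ)+1)) * y ^ ((r:ℝ)/((r:ℝ)+1)))⁻¹ := by
            apply mul_le_mul_of_nonneg_left hamgm hG.le
        _ = 1 := mul_inv_cancel₀ (ne_of_gt hG)
    have hexp : (1/((r:ℝ)+1) * x⁻¹ + (r:ℝ)/((r:ℝ)+1) * y⁻¹) * (((r:ℝ)+1) * x * y)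
        = y + r * x := by field_simp
    nlinarith [mul_le_mul_of_nonneg_right h2 (by positivity : (0:ℝ) ≤ ((r:ℝ)+1) * x * y)]
  set G := (x * y ^ r) ^ ((1:ℝ)/(r+1)) with hGdef
  have hgm' : ((r:ℝ)+1) * x * y ≤ G * (y + r * x) := (div_le_iff₀ hD1).mp hgm
  have h1 : x + r * y - ((r:ℝ)+1) * G ≤ (r:ℝ) * (x - y)^2 / (y + r * x) := by
    rw [le_div_iff₀ hD1]
    nlinarith [mul_le_mul_of_nonneg_left hgm' hn.le]
  have h2 : (r:ℝ) * (x - y)^2 / (y + r * x) < (r:ℝ)^(r+2) * (x - y)^2 / (x + r * y) := by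
    rw [div_lt_div_iff₀ hD1 hD2]
    have hsq : (0:ℝ) < (x - y)^2 := by
      have : x - y ≠ 0 := sub_ne_zero.mpr hne
      positivity
    have hp2 : (r:ℝ)^2 < (r:ℝ)^(r+2) := by
      apply pow_lt_pow_right₀ hrr; omega
    have hp3 : (r:ℝ) < (r:ℝ)^(r+3) := by
      calc (r:ℝ) = (r:ℝ)^1 := (pow_one _).symm
        _ < (r:ℝ)^(r+3) := by apply pow_lt_pow_right₀ hrr; omega
    have hps : (r:ℝ)^(r+3) = (r:ℝ)^(r+2) * r := by rw [pow_succ]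
    nlinarith [hsq, mul_pos hsq hx, mul_pos hsq hy]
  linarith

theorem stmt_8 (r : ℕ) (hr : 2 ≤ r) (a b p q N : ℝ)
    (ha : 0 < a) (hb : 0 < b) (hp : 0 < p) (hq : 0 < q)
    (hne : a * q ≠ b * p) (hN : N = p ^ r * q) :
    a * q + r * b * p - (r + 1) * (a * b ^ r * N) ^ ((1 : ℝ) / (r + 1))
      < (r : ℝ) ^ (r + 2) * (a * q - b * p) ^ 2 / (a * q + r * b * p) := by
  have hx : (0:ℝ) < a * q := mul_pos ha hq
  have hy : (0:ℝ) < b * p := mul_pos hb hp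
  have hNx : a * b ^ r * N = (a * q) * (b * p) ^ r := by rw [hN]; ring
  have h := amgm_key r hr (a * q) (b * p) hx hy hne
  rw [hNx]
  have e1 : (r:ℝ) * b * p = (r:ℝ) * (b * p) := by ring
  rw [e1]
  exact h
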